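/- If a set S of incomparable pairs of a finite poset P contains no alternating cycle of any length k ≥ 2, then S is reversible, i.e., there exists a linear extension of P reversing every pair in S. -/

import Mathlib

variable {α : Type*}

/-- `L` is a linear extension of the partial order on `α`. -/
def IsLinExt [PartialOrder α] (L : LinearOrder α) : Prop :=
  ∀ x y : α, x ≤ y → L.le x y

/-- The set of ordered incomparable pairs of the poset `α`. -/
def Inc (α : Type*) [PartialOrder α] : Set (α × α) :=
  {p | ¬ p.1 ≤ p.2 ∧ ¬ p.2 ≤ p.1}

/-- `L` reverses every pair of `S`. -/
def Reverses [PartialOrder α] (L : LinearOrder α) (S : Set (α × α)) : Prop :=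
  ∀ p ∈ S, L.lt p.2 p.1

/-- `S` is reversible: some linear extension reverses all its pairs. -/
def Reversible [PartialOrder α] (S : Set (α × α)) : Prop :=
  ∃ L : LinearOrder α, IsLinExt L ∧ Reverses L S

/-- An alternating cycle of length `k ≥ 2` contained in `S`, indexed cyclically. -/
def IsAltCycle [PartialOrder α] (S : Set (α × α)) (k : ℕ) (x y : ZMod k → α) : Prop :=
  2 ≤ k ∧ (∀ i, (x i, y i) ∈ S) ∧ ∀ i, x i ≤ y (i + 1)

/-- A strict alternating cycle: `x i ≤ y j` iff `j = i + 1`, and the `x`'s and `y`'s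
form `k`-element antichains. -/
def IsStrictAltCycle [PartialOrder α] (S : Set (α × α)) (k : ℕ) (x y : ZMod k → α) : Prop :=
  IsAltCycle S k x y ∧ (∀ i j, x i ≤ y j ↔ j = i + 1) ∧
  Function.Injective x ∧ Function.Injective y ∧
  (∀ i j : ZMod k, i ≠ j → ¬ x i ≤ x j) ∧ (∀ i j : ZMod k, i ≠ j → ¬ y i ≤ y j)

/-- `α` has a realizer consisting of `d` linear extensions. -/
def HasRealizer (α : Type*) [PartialOrder α] (d : ℕ) : Prop :=
  ∃ f : Fin d → LinearOrder α, (∀ i, IsLinExt (f i)) ∧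
    ∀ x y : α, x ≤ y ↔ ∀ i, (f i).le x y

/-- The (Dushnik–Miller) dimension of the poset `α`. -/
noncomputable def pdim (α : Type*) [PartialOrder α] : ℕ :=
  sInf {d | 0 < d ∧ HasRealizer α d}

section Aux

variable [PartialOrder α]

/-- One step: either a strict poset step or a reversed `S`-pair. -/
def StepRel (S : Set (α × α)) (a b : α) : Prop := a < b ∨ (b, a) ∈ S

lemma transGen_stepRel {S : Set (α × α)} {a b : α}
    (hab : Relation.TransGen (StepRel S) a b) :
    a < b ∨ ∃ (n : ℕ) (x y : ℕ → α), (∀ i ≤ n, (x i, y i) ∈ S) ∧ a ≤ y 0 ∧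
      (∀ i < n, x i ≤ y (i + 1)) ∧ x n ≤ b := by
  induction hab with
  | @single b h =>
    rcases h with h | h
    · exact Or.inl h
    · exact Or.inr ⟨0, fun _ => b, fun _ => a, fun i _ => h, le_refl a,
        fun i hi => absurd hi (by omega), le_refl b⟩
  | @tail b c hab h ih =>
    rcases h with h | h
    · rcases ih with h1 | ⟨n, x, y, hx, ha, hchain, hb⟩
      · exact Or.inl (h1.trans h)
      · exact Or.inr ⟨n, x, y, hx, ha, hchain, hb.trans h.le⟩
    · rcases ih with h1 | ⟨n, x, y, hx, ha, hchain, hb⟩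
      · exact Or.inr ⟨0, fun _ => c, fun _ => b, fun _ _ => h, h1.le,
          fun i hi => absurd hi (by omega), le_refl c⟩
      · refine Or.inr ⟨n + 1, fun i => if i ≤ n then x i else c,
          fun i => if i ≤ n then y i else b, ?_, ?_, ?_, ?_⟩
        · intro i hi
          by_cases h' : i ≤ n
          · simpa [h'] using hx i h'
          · simpa [h'] using h
        · simpa using ha
        · intro i hi
          by_cases h' : i < n
          · have h1 : i ≤ n := by omega
            have h2 : i + 1 ≤ n := by omega
            simpa [h1, h2] using hchain i h'
          · have hin : i = n := by omega
            subst hin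
            simp [show ¬ i + 1 ≤ i by omega]
            exact hb
        · simp

lemma not_transGen_self {S : Set (α × α)} (hS : S ⊆ Inc α)
    (h : ∀ (k : ℕ) (x y : ZMod k → α), ¬ IsAltCycle S k x y) (a : α) :
    ¬ Relation.TransGen (StepRel S) a a := by
  intro hc
  rcases transGen_stepRel hc with h1 | ⟨n, x, y, hx, ha, hchain, hb⟩
  · exact lt_irrefl a h1
  rcases Nat.eq_zero_or_pos n with rfl | hn
  · exact (hS (hx 0 le_rfl)).1 (hb.trans ha)
  · apply h (n + 1) (fun i : ZMod (n + 1) => x i.val) (fun i => y i.val)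
    have hval : ∀ i : ZMod (n + 1), i.val < n + 1 := fun i => ZMod.val_lt i
    refine ⟨by omega, fun i => hx i.val (by have := hval i; omega), ?_⟩
    intro i
    by_cases hi : i.val < n
    · have hone : (1 : ZMod (n + 1)).val = 1 := ZMod.val_one'' (by omega)
      have : (i + 1).val = i.val + 1 := by
        rw [ZMod.val_add_of_lt]
        · rw [hone]
        · rw [hone]; omega
      show x i.val ≤ y ((i + 1).val)
      rw [this]
      exact hchain i.val hi
    · have hin : i.val = n := by have := hval i; omega
      have : i + 1 = 0 := by
        have h1 : ((i.val : ℕ) : ZMod (n + 1)) = i := ZMod.natCast_rightInverse i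
        have : ((i.val + 1 : ℕ) : ZMod (n + 1)) = i + 1 := by push_cast [h1]; ring
        rw [← this, hin, ZMod.natCast_self]
      show x i.val ≤ y ((i + 1).val)
      rw [this, hin, ZMod.val_zero]
      exact hb.trans ha

/-- Turn an `IsLinearOrder` witness into a `LinearOrder` structure. -/
noncomputable def linOf (s : α → α → Prop) (hs : IsLinearOrder α s) : LinearOrder α :=
  haveI := hs
  { le := s
    lt := fun a b => s a b ∧ ¬ s b a
    lt_iff_le_not_ge := fun _ _ => Iff.rfl
    le_refl := fun a => refl_of s a
    le_trans := fun _ _ _ h1 h2 => trans_of s h1 h2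
    le_antisymm := fun _ _ h1 h2 => antisymm_of s h1 h2
    le_total := fun a b => total_of s a b
    toDecidableLE := Classical.decRel s }

end Aux

/-- If `S ⊆ Inc(P)` contains no alternating cycle of any length, then `S` is reversible. -/
theorem stmt_2 [PartialOrder α] [Fintype α] (S : Set (α × α)) (hS : S ⊆ Inc α)
    (h : ∀ (k : ℕ) (x y : ZMod k → α), ¬ IsAltCycle S k x y) :
    Reversible S := by
  classical
  let le' : α → α → Prop := fun a b => a = b ∨ Relation.TransGen (StepRel S) a b
  haveI hpo : IsPartialOrder α le' :=
    { refl := fun a => Or.inl rfl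
      trans := by
        intro a b c h1 h2
        rcases h1 with rfl | h1
        · exact h2
        rcases h2 with rfl | h2
        · exact Or.inr h1
        · exact Or.inr (h1.trans h2)
      antisymm := by
        intro a b h1 h2
        rcases h1 with rfl | h1
        · rfl
        rcases h2 with rfl | h2
        · rfl
        · exact absurd (h1.trans h2) (not_transGen_self hS h a) }
  obtain ⟨s, hs, hsub⟩ := extend_partialOrder le'
  haveI := hs
  refine ⟨linOf s hs, ?_, ?_⟩
  · intro x y hxy
    rcases eq_or_lt_of_le hxy with rfl | hlt
    · exact hsub x x (Or.inl rfl)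
    · exact hsub _ _ (Or.inr (Relation.TransGen.single (Or.inl hlt)))
  · intro p hp
    have h1 : s p.2 p.1 := hsub _ _ (Or.inr (Relation.TransGen.single (Or.inr hp)))
    have hne : p.2 ≠ p.1 := fun e => (hS hp).1 (e ▸ le_refl p.1)
    have := @lt_iff_le_not_ge α (linOf s hs).toPreorder p.2 p.1
    exact this.mpr ⟨h1, fun h2 => hne (antisymm_of s h1 h2)⟩
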